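/- Let ψ: ℝ → ℝ be convex with minimum attained at 0, let I = {a,...,b} ⊂ ℤ, and define J(f) = Σ_{i=a+1}^b ψ(f(i)-f(i-1)). Fix f: I → ℝ and let K̄_f = {g: I → ℝ : g ≤ f, g(a) = f(a)}. Then inf_{g ∈ K̄_f} J(g) = J(h̄), where h̄ is the decreasing lower convex envelope of f (the supremum of all convex weakly decreasing functions on I which are ≤ f). -/

import Mathlib

/-- A choice of subgradient for a convex function on `ℝ`: the sup of the left slopes
for negative arguments, and `0` at `0` and beyond. -/
noncomputable def mysubg (ψ : ℝ → ℝ) (s : ℝ) : ℝ :=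
  if s < 0 then sSup ((fun y => (ψ s - ψ y) / (s - y)) '' Set.Iio s) else 0

lemma myslope_bdd {ψ : ℝ → ℝ} (hψ : ConvexOn ℝ Set.univ ψ) (s : ℝ) :
    BddAbove ((fun y => (ψ s - ψ y) / (s - y)) '' Set.Iio s) := by
  refine ⟨(ψ (s + 1) - ψ s) / (s + 1 - s), ?_⟩
  rintro z ⟨y, hy, rfl⟩
  exact hψ.slope_mono_adjacent (Set.mem_univ y) (Set.mem_univ (s + 1)) hy (lt_add_one s)

lemma myslope_ne {ψ : ℝ → ℝ} (s : ℝ) :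
    ((fun y => (ψ s - ψ y) / (s - y)) '' Set.Iio s).Nonempty :=
  ⟨_, ⟨s - 1, by simp, rfl⟩⟩

lemma mysubg_zero (ψ : ℝ → ℝ) : mysubg ψ 0 = 0 := by simp [mysubg]

lemma mysubg_spec {ψ : ℝ → ℝ} (hψ : ConvexOn ℝ Set.univ ψ) (hψ0 : ∀ x : ℝ, ψ 0 ≤ ψ x)
    {s : ℝ} (hs : s ≤ 0) (x : ℝ) : ψ s + mysubg ψ s * (x - s) ≤ ψ x := by
  rcases eq_or_lt_of_le hs with rfl | hs'
  · rw [mysubg_zero]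
    simpa using hψ0 x
  · rw [mysubg, if_pos hs']
    set c := sSup ((fun y => (ψ s - ψ y) / (s - y)) '' Set.Iio s) with hc
    rcases lt_trichotomy x s with h | h | h
    · have hmem : (ψ s - ψ x) / (s - x) ∈ ((fun y => (ψ s - ψ y) / (s - y)) '' Set.Iio s) :=
        ⟨x, h, rfl⟩
      have hle := le_csSup (myslope_bdd hψ s) hmem
      rw [div_le_iff₀ (by linarith : (0:ℝ) < s - x)] at hle
      nlinarith
    · subst h; simp
    · have hub : ∀ z ∈ ((fun y => (ψ s - ψ y) / (s - y)) '' Set.Iio s),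
          z ≤ (ψ x - ψ s) / (x - s) := by
        rintro z ⟨y, hy, rfl⟩
        exact hψ.slope_mono_adjacent (Set.mem_univ y) (Set.mem_univ x) hy h
      have hle : c ≤ (ψ x - ψ s) / (x - s) := csSup_le (myslope_ne s) hub
      rw [le_div_iff₀ (by linarith : (0:ℝ) < x - s)] at hle
      nlinarith

lemma mysubg_nonpos {ψ : ℝ → ℝ} (hψ : ConvexOn ℝ Set.univ ψ) (hψ0 : ∀ x : ℝ, ψ 0 ≤ ψ x)
    {s : ℝ} (hs : s ≤ 0) : mysubg ψ s ≤ 0 := by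
  rcases eq_or_lt_of_le hs with rfl | hs'
  · rw [mysubg_zero]
  · have h := mysubg_spec hψ hψ0 hs 0
    have h0 := hψ0 s
    by_contra hpos
    push_neg at hpos
    nlinarith [mul_pos hpos (by linarith : (0:ℝ) < 0 - s)]

lemma mysubg_mono {ψ : ℝ → ℝ} (hψ : ConvexOn ℝ Set.univ ψ) (hψ0 : ∀ x : ℝ, ψ 0 ≤ ψ x)
    {s t : ℝ} (hst : s ≤ t) (ht : t ≤ 0) : mysubg ψ s ≤ mysubg ψ t := by
  rcases eq_or_lt_of_le hst with rfl | hst'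
  · exact le_rfl
  · rcases eq_or_lt_of_le ht with rfl | ht'
    · rw [mysubg_zero]
      exact mysubg_nonpos hψ hψ0 (le_of_lt hst')
    · have hs' : s < 0 := hst'.trans ht'
      rw [mysubg, mysubg, if_pos hs', if_pos ht']
      have h1 : sSup ((fun y => (ψ s - ψ y) / (s - y)) '' Set.Iio s) ≤ (ψ t - ψ s) / (t - s) := by
        refine csSup_le (myslope_ne s) ?_
        rintro z ⟨y, hy, rfl⟩
        exact hψ.slope_mono_adjacent (Set.mem_univ y) (Set.mem_univ t) hy hst'
      have h2 : (ψ t - ψ s) / (t - s) ≤ sSup ((fun y => (ψ t - ψ y) / (t - y)) '' Set.Iio t) :=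
        le_csSup (myslope_bdd hψ t) ⟨s, hst', rfl⟩
      linarith

lemma my_abel (a b : ℤ) (hab : a ≤ b) (u C : ℤ → ℝ) :
    ∑ i ∈ Finset.Icc (a + 1) b, C i * (u i - u (i - 1)) =
      ∑ i ∈ Finset.Icc (a + 1) b, (C i - C (i + 1)) * u i
        + C (b + 1) * u b - C (a + 1) * u a := by
  refine Int.le_induction (motive := fun b _ => ∑ i ∈ Finset.Icc (a + 1) b, C i * (u i - u (i - 1)) =
      ∑ i ∈ Finset.Icc (a + 1) b, (C i - C (i + 1)) * u i
        + C (b + 1) * u b - C (a + 1) * u a) ?_ ?_ b hab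
  · rw [Finset.Icc_eq_empty (by omega : ¬ a + 1 ≤ a)]
    simp
  · intro b hb ih
    have hins : Finset.Icc (a + 1) (b + 1) = insert (b + 1) (Finset.Icc (a + 1) b) := by
      ext x
      simp only [Finset.mem_Icc, Finset.mem_insert]
      omega
    have hnm : (b + 1) ∉ Finset.Icc (a + 1) b := by
      simp only [Finset.mem_Icc]; omega
    rw [hins, Finset.sum_insert hnm, Finset.sum_insert hnm, ih]
    have h1 : (b : ℤ) + 1 - 1 = b := by ring
    rw [h1]
    ring

/-- With `ψ` convex attaining its minimum at `0`, the infimum of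
`J g = ∑_{i=a+1}^b ψ(g i - g (i-1))` over `K̄_f = {g ≤ f on I, g a = f a}` equals
`J h̄`, where `h̄` is the decreasing lower convex envelope of `f`
(sup of discretely convex, weakly decreasing functions below `f` on `I`). -/
theorem stmt1 (a b : ℤ) (hab : a ≤ b) (ψ : ℝ → ℝ) (hψ : ConvexOn ℝ Set.univ ψ)
    (hψ0 : ∀ x : ℝ, ψ 0 ≤ ψ x)
    (f hbar : ℤ → ℝ)
    (DConvexDecr : (ℤ → ℝ) → Prop)
    (hDConvexDecr : ∀ g, DConvexDecr g ↔
      ((∀ i : ℤ, a ≤ i → i + 2 ≤ b → g (i + 1) - g i ≤ g (i + 2) - g (i + 1)) ∧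
       (∀ i : ℤ, a ≤ i → i + 1 ≤ b → g (i + 1) ≤ g i)))
    (J : (ℤ → ℝ) → ℝ)
    (hJ : ∀ g, J g = ∑ i ∈ Finset.Icc (a + 1) b, ψ (g i - g (i - 1)))
    (hhbar : ∀ i ∈ Set.Icc a b,
      IsLUB {y : ℝ | ∃ g : ℤ → ℝ, DConvexDecr g ∧ (∀ j ∈ Set.Icc a b, g j ≤ f j) ∧ y = g i}
        (hbar i)) :
    sInf (J '' {g : ℤ → ℝ | (∀ j ∈ Set.Icc a b, g j ≤ f j) ∧ g a = f a})
      = J hbar := by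
  -- upper-bound property of the envelope
  have hub : ∀ i, i ∈ Set.Icc a b → ∀ g : ℤ → ℝ, DConvexDecr g →
      (∀ j ∈ Set.Icc a b, g j ≤ f j) → g i ≤ hbar i :=
    fun i hi g hg hgf => (hhbar i hi).1 ⟨g, hg, hgf, rfl⟩
  have hbar_le_f : ∀ i ∈ Set.Icc a b, hbar i ≤ f i := by
    intro i hi
    refine (hhbar i hi).2 ?_
    rintro y ⟨g, hg, hgf, rfl⟩
    exact hgf i hi
  -- the envelope is convex and decreasing on the window
  have hconv : ∀ i : ℤ, a ≤ i → i + 2 ≤ b →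
      hbar (i + 1) - hbar i ≤ hbar (i + 2) - hbar (i + 1) := by
    intro i h1 h2
    have hmid : hbar (i + 1) ≤ (hbar i + hbar (i + 2)) / 2 := by
      refine (hhbar (i + 1) ⟨by omega, by omega⟩).2 ?_
      rintro y ⟨g, hg, hgf, rfl⟩
      have hgc := ((hDConvexDecr g).1 hg).1 i h1 h2
      have hgi := hub i ⟨h1, by omega⟩ g hg hgf
      have hgi2 := hub (i + 2) ⟨by omega, h2⟩ g hg hgf
      linarith
    linarith
  have hdecr : ∀ i : ℤ, a ≤ i → i + 1 ≤ b → hbar (i + 1) ≤ hbar i := by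
    intro i h1 h2
    refine (hhbar (i + 1) ⟨by omega, h2⟩).2 ?_
    rintro y ⟨g, hg, hgf, rfl⟩
    have hgd := ((hDConvexDecr g).1 hg).2 i h1 h2
    have hgi := hub i ⟨h1, by omega⟩ g hg hgf
    linarith
  have hbar_DCD : DConvexDecr hbar := (hDConvexDecr hbar).2 ⟨hconv, hdecr⟩
  -- the envelope agrees with f at a
  have hbar_a : hbar a = f a := by
    refine le_antisymm (hbar_le_f a ⟨le_refl a, hab⟩) ?_
    have hne : (Finset.Icc a b).Nonempty := ⟨a, by simp [Finset.mem_Icc]; omega⟩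
    set m : ℝ := (Finset.Icc a b).inf' hne f with hm
    have hmle : ∀ j ∈ Set.Icc a b, m ≤ f j := by
      intro j hj
      exact Finset.inf'_le f (by simp only [Finset.mem_Icc]; exact ⟨hj.1, hj.2⟩)
    have hma : m ≤ f a := hmle a ⟨le_refl a, hab⟩
    set g₀ : ℤ → ℝ := fun j => if j ≤ a then f a else m with hg₀
    have hg₀DCD : DConvexDecr g₀ := by
      rw [hDConvexDecr]
      constructor
      · intro i h1 h2
        by_cases hia : i ≤ a
        · have : i = a := le_antisymm hia h1
          subst this
          simp only [hg₀, if_pos (le_refl i), if_neg (by omega : ¬ i + 1 ≤ i),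
            if_neg (by omega : ¬ i + 2 ≤ i)]
          linarith
        · simp only [hg₀, if_neg hia, if_neg (by omega : ¬ i + 1 ≤ a),
            if_neg (by omega : ¬ i + 2 ≤ a)]
          linarith
      · intro i h1 h2
        by_cases hia : i ≤ a
        · have : i = a := le_antisymm hia h1
          subst this
          simp only [hg₀, if_pos (le_refl i), if_neg (by omega : ¬ i + 1 ≤ i)]
          linarith
        · simp only [hg₀, if_neg hia, if_neg (by omega : ¬ i + 1 ≤ a)]
          exact le_rfl
    have hg₀f : ∀ j ∈ Set.Icc a b, g₀ j ≤ f j := by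
      intro j hj
      simp only [hg₀]
      split_ifs with h
      · have : j = a := le_antisymm h hj.1
        rw [this]
      · exact hmle j hj
    have := hub a ⟨le_refl a, hab⟩ g₀ hg₀DCD hg₀f
    simpa only [hg₀, if_pos (le_refl a)] using this
  -- contact at interior kinks
  have contact_mid : ∀ i : ℤ, a + 1 ≤ i → i + 1 ≤ b →
      hbar i - hbar (i - 1) < hbar (i + 1) - hbar i → hbar i = f i := by
    intro i h1 h2 hk
    by_contra hne
    have hlt : hbar i < f i := lt_of_le_of_ne (hbar_le_f i ⟨by omega, by omega⟩) hne
    set ε : ℝ := min (f i - hbar i) ((hbar (i + 1) - hbar i - (hbar i - hbar (i - 1))) / 2)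
      with hε
    have hεpos : 0 < ε := lt_min (by linarith) (by linarith)
    have hε1 : ε ≤ f i - hbar i := min_le_left _ _
    have hε2 : ε ≤ (hbar (i + 1) - hbar i - (hbar i - hbar (i - 1))) / 2 := min_le_right _ _
    set g₁ : ℤ → ℝ := fun j => if j = i then hbar i + ε else hbar j with hg₁
    have hg₁DCD : DConvexDecr g₁ := by
      rw [hDConvexDecr]
      constructor
      · intro k hk1 hk2
        have hcv := hconv k hk1 hk2
        by_cases e0 : k = i
        · subst e0
          simp only [hg₁, if_pos rfl, if_neg (by omega : ¬ k + 1 = k),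
            if_neg (by omega : ¬ k + 2 = k)]
          linarith
        · by_cases e1 : k + 1 = i
          · simp only [hg₁, if_neg e0, if_pos e1, if_neg (by omega : ¬ k + 2 = i)]
            rw [show k + 2 = i + 1 by omega, show k = i - 1 by omega]
            linarith
          · by_cases e2 : k + 2 = i
            · simp only [hg₁, if_neg e0, if_neg e1, if_pos e2]
              rw [e2] at hcv
              linarith
            · simp only [hg₁, if_neg e0, if_neg e1, if_neg e2]
              exact hcv
      · intro k hk1 hk2
        have hdc := hdecr k hk1 hk2
        by_cases e0 : k = i
        · subst e0
          simp only [hg₁, if_pos rfl, if_neg (by omega : ¬ k + 1 = k)]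
          linarith
        · by_cases e1 : k + 1 = i
          · simp only [hg₁, if_neg e0, if_pos e1]
            have hd1 : hbar (i + 1) ≤ hbar i := hdecr i (by omega) (by omega)
            rw [show k = i - 1 by omega]
            linarith
          · simp only [hg₁, if_neg e0, if_neg e1]
            exact hdc
    have hg₁f : ∀ j ∈ Set.Icc a b, g₁ j ≤ f j := by
      intro j hj
      simp only [hg₁]
      split_ifs with h
      · rw [h]; linarith
      · exact hbar_le_f j hj
    have := hub i ⟨by omega, by omega⟩ g₁ hg₁DCD hg₁f
    simp only [hg₁, if_pos rfl] at this
    linarith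
  -- contact at the right end when the last slope is negative
  have contact_end : a + 1 ≤ b → hbar b < hbar (b - 1) → hbar b = f b := by
    intro h1 hk
    by_contra hne
    have hlt : hbar b < f b := lt_of_le_of_ne (hbar_le_f b ⟨by omega, le_refl b⟩) hne
    set ε : ℝ := min (f b - hbar b) (hbar (b - 1) - hbar b) with hε
    have hεpos : 0 < ε := lt_min (by linarith) (by linarith)
    have hε1 : ε ≤ f b - hbar b := min_le_left _ _
    have hε2 : ε ≤ hbar (b - 1) - hbar b := min_le_right _ _
    set g₁ : ℤ → ℝ := fun j => if j = b then hbar b + ε else hbar j with hg₁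
    have hg₁DCD : DConvexDecr g₁ := by
      rw [hDConvexDecr]
      constructor
      · intro k hk1 hk2
        have hcv := hconv k hk1 hk2
        by_cases e2 : k + 2 = b
        · simp only [hg₁, if_neg (by omega : ¬ k = b), if_neg (by omega : ¬ k + 1 = b),
            if_pos e2]
          rw [e2] at hcv
          linarith
        · simp only [hg₁, if_neg (by omega : ¬ k = b), if_neg (by omega : ¬ k + 1 = b),
            if_neg e2]
          exact hcv
      · intro k hk1 hk2
        have hdc := hdecr k hk1 hk2
        by_cases e1 : k + 1 = b
        · simp only [hg₁, if_neg (by omega : ¬ k = b), if_pos e1]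
          rw [show k = b - 1 by omega]
          linarith
        · simp only [hg₁, if_neg (by omega : ¬ k = b), if_neg e1]
          exact hdc
    have hg₁f : ∀ j ∈ Set.Icc a b, g₁ j ≤ f j := by
      intro j hj
      simp only [hg₁]
      split_ifs with h
      · rw [h]; linarith
      · exact hbar_le_f j hj
    have := hub b ⟨hab, le_refl b⟩ g₁ hg₁DCD hg₁f
    simp only [hg₁, if_pos rfl] at this
    linarith
  -- slopes of the envelope are nonpositive
  have hdneg : ∀ i : ℤ, a + 1 ≤ i → i ≤ b → hbar i - hbar (i - 1) ≤ 0 := by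
    intro i h1 h2
    have := hdecr (i - 1) (by omega) (by omega)
    rw [show i - 1 + 1 = i by ring] at this
    linarith
  -- main inequality : J hbar ≤ J g for any admissible g
  have main : ∀ g : ℤ → ℝ, (∀ j ∈ Set.Icc a b, g j ≤ f j) → g a = f a → J hbar ≤ J g := by
    intro g hgf hga
    rw [hJ, hJ]
    set u : ℤ → ℝ := fun j => g j - hbar j with hu
    set C : ℤ → ℝ := fun i => if i ≤ b then mysubg ψ (hbar i - hbar (i - 1)) else 0 with hC
    have hua : u a = 0 := by simp [hu, hga, hbar_a]
    have hCb1 : C (b + 1) = 0 := by simp [hC]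
    have step1 : ∑ i ∈ Finset.Icc (a + 1) b, ψ (hbar i - hbar (i - 1))
        + ∑ i ∈ Finset.Icc (a + 1) b, C i * (u i - u (i - 1))
        ≤ ∑ i ∈ Finset.Icc (a + 1) b, ψ (g i - g (i - 1)) := by
      rw [← Finset.sum_add_distrib]
      refine Finset.sum_le_sum ?_
      intro i hi
      simp only [Finset.mem_Icc] at hi
      have hCi : C i = mysubg ψ (hbar i - hbar (i - 1)) := if_pos hi.2
      have hd : hbar i - hbar (i - 1) ≤ 0 := hdneg i hi.1 hi.2
      have hspec := mysubg_spec hψ hψ0 hd (g i - g (i - 1))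
      have huu : u i - u (i - 1)
          = (g i - g (i - 1)) - (hbar i - hbar (i - 1)) := by simp [hu]; ring
      rw [hCi, huu]
      linarith
    have step2 : ∑ i ∈ Finset.Icc (a + 1) b, C i * (u i - u (i - 1))
        = ∑ i ∈ Finset.Icc (a + 1) b, (C i - C (i + 1)) * u i := by
      rw [my_abel a b hab u C, hCb1, hua]
      ring
    have step3 : 0 ≤ ∑ i ∈ Finset.Icc (a + 1) b, (C i - C (i + 1)) * u i := by
      refine Finset.sum_nonneg ?_
      intro i hi
      simp only [Finset.mem_Icc] at hi
      have hd : hbar i - hbar (i - 1) ≤ 0 := hdneg i hi.1 hi.2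
      have hCi : C i = mysubg ψ (hbar i - hbar (i - 1)) := if_pos hi.2
      rcases eq_or_lt_of_le hi.2 with hib | hib
      · subst hib
        rw [hCb1, sub_zero, hCi]
        rcases eq_or_lt_of_le hd with hd0 | hdlt
        · rw [hd0, mysubg_zero]
          simp
        · have hcontact := contact_end hi.1 (by linarith)
          have hu_b : u i ≤ 0 := by
            simp only [hu]
            rw [hcontact]
            have := hgf i ⟨by omega, le_refl i⟩
            linarith
          have hcneg := mysubg_nonpos hψ hψ0 hd
          nlinarith
      · have hCi1 : C (i + 1) = mysubg ψ (hbar (i + 1) - hbar i) := by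
          simp only [hC]
          rw [if_pos (show i + 1 ≤ b by omega), show i + 1 - 1 = i by ring]
        have hd1 : hbar (i + 1) - hbar i ≤ 0 := by
          have := hdecr i (by omega) (by omega)
          linarith
        have hd_mono : hbar i - hbar (i - 1) ≤ hbar (i + 1) - hbar i := by
          have := hconv (i - 1) (by omega) (by omega)
          rw [show i - 1 + 1 = i by ring, show i - 1 + 2 = i + 1 by ring] at this
          exact this
        rcases eq_or_lt_of_le hd_mono with heq | hlt
        · rw [hCi, hCi1, heq]
          simp
        · have hcontact := contact_mid i hi.1 (by omega) hlt
          have hu_i : u i ≤ 0 := by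
            simp only [hu]
            rw [hcontact]
            have := hgf i ⟨by omega, by omega⟩
            linarith
          have hcmono : C i ≤ C (i + 1) := by
            rw [hCi, hCi1]
            exact mysubg_mono hψ hψ0 (le_of_lt hlt) hd1
          nlinarith
    linarith
  -- conclude
  refine IsLeast.csInf_eq ⟨⟨hbar, ⟨hbar_le_f, hbar_a⟩, rfl⟩, ?_⟩
  rintro y ⟨g, ⟨hgf, hga⟩, rfl⟩
  exact main g hgf hga
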